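/- For an integer j ≥ 1, let K̃_j(ξ) = ((j+1)/(2j))(1−|ξ|^j) for |ξ| ≤ 1 and 0 otherwise, and let m̃_{j,k} = ∫_ℝ ξ^k K̃_j(ξ) dξ. Then m̃_{j,2} = (j+1)/(3(j+3)), m̃_{j,4} = (j+1)/(5(j+5)), and the normalized fourth moment m̃_{j,4}/(m̃_{j,2})² = 9(j+3)²/(5(j+1)(j+5)) is strictly less than 3 for every j ≥ 1. -/

import Mathlib

open MeasureTheory intervalIntegral

lemma kernel_integral_aux (j k : ℕ) (hk : Even k) :
    (∫ ξ : ℝ, (Set.Icc (-1:ℝ) 1).indicator (fun x => x ^ k * (1 - |x| ^ j)) ξ)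
      = 2 * (1 / ((k:ℝ) + 1) - 1 / ((k:ℝ) + (j:ℝ) + 1)) := by
  have hcont : Continuous fun x : ℝ => x ^ k * (1 - |x| ^ j) := by
    continuity
  have h1 : (∫ ξ : ℝ, (Set.Icc (-1:ℝ) 1).indicator (fun x => x ^ k * (1 - |x| ^ j)) ξ)
       = ∫ x in (-1:ℝ)..1, x ^ k * (1 - |x| ^ j) := by
    rw [MeasureTheory.integral_indicator measurableSet_Icc, integral_Icc_eq_integral_Ioc,
      ← intervalIntegral.integral_of_le (by norm_num : (-1:ℝ) ≤ 1)]
  have hsplit : (∫ x in (-1:ℝ)..1, x ^ k * (1 - |x| ^ j))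
      = (∫ x in (-1:ℝ)..0, x ^ k * (1 - |x| ^ j)) + ∫ x in (0:ℝ)..1, x ^ k * (1 - |x| ^ j) := by
    rw [intervalIntegral.integral_add_adjacent_intervals] <;>
      exact hcont.intervalIntegrable _ _
  have heven : (∫ x in (-1:ℝ)..0, x ^ k * (1 - |x| ^ j))
      = ∫ x in (0:ℝ)..1, x ^ k * (1 - |x| ^ j) := by
    have := intervalIntegral.integral_comp_neg (a := (0:ℝ)) (b := 1)
      (fun x => x ^ k * (1 - |x| ^ j))
    rw [neg_zero] at this
    rw [← this]
    simp only [abs_neg, hk.neg_pow]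
  have hright : (∫ x in (0:ℝ)..1, x ^ k * (1 - |x| ^ j))
      = ∫ x in (0:ℝ)..1, (x ^ k - x ^ (k + j)) := by
    apply intervalIntegral.integral_congr
    intro x hx
    rw [Set.uIcc_of_le (by norm_num : (0:ℝ) ≤ 1)] at hx
    show x ^ k * (1 - |x| ^ j) = x ^ k - x ^ (k + j)
    rw [abs_of_nonneg hx.1, pow_add]
    ring
  have hval : (∫ x in (0:ℝ)..1, (x ^ k - x ^ (k + j)))
      = 1 / ((k:ℝ) + 1) - 1 / ((k:ℝ) + (j:ℝ) + 1) := by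
    rw [intervalIntegral.integral_sub ((continuous_pow k).intervalIntegrable _ _)
      ((continuous_pow (k+j)).intervalIntegrable _ _), integral_pow, integral_pow]
    push_cast
    rw [one_pow, one_pow]
    ring
  rw [h1, hsplit, heven, hright, hval]
  ring


/-- For `K̃_j(ξ) = ((j+1)/(2j))(1−|ξ|^j) 𝟙_{|ξ|≤1}` (`j ≥ 1`) with
moments `m̃_{j,k} = ∫ ξ^k K̃_j(ξ) dξ`, one has `m̃_{j,2} = (j+1)/(3(j+3))`,
`m̃_{j,4} = (j+1)/(5(j+5))`, and the normalized fourth moment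
`m̃_{j,4}/m̃_{j,2}² = 9(j+3)²/(5(j+1)(j+5))` is strictly less than `3`. -/
theorem even_polynomial_kernel_fourth_moment_lt_three
    (j : ℕ) (hj : 1 ≤ j)
    (Kj : ℝ → ℝ)
    (hK : ∀ ξ, Kj ξ = if |ξ| ≤ 1 then ((j : ℝ) + 1) / (2 * (j : ℝ)) * (1 - |ξ| ^ j) else 0)
    (mt : ℕ → ℝ) (hmt : ∀ k, mt k = ∫ ξ, ξ ^ k * Kj ξ) :
    mt 2 = ((j : ℝ) + 1) / (3 * ((j : ℝ) + 3)) ∧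
    mt 4 = ((j : ℝ) + 1) / (5 * ((j : ℝ) + 5)) ∧
    mt 4 / (mt 2) ^ 2 = 9 * ((j : ℝ) + 3) ^ 2 / (5 * ((j : ℝ) + 1) * ((j : ℝ) + 5)) ∧
    mt 4 / (mt 2) ^ 2 < 3 := by
  have hj1 : (1:ℝ) ≤ (j:ℝ) := by exact_mod_cast hj
  have hjpos : (0:ℝ) < (j:ℝ) := by linarith
  have hjne : (j:ℝ) ≠ 0 := ne_of_gt hjpos
  set c : ℝ := ((j : ℝ) + 1) / (2 * (j : ℝ)) with hc
  have key : ∀ k : ℕ, Even k →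
      mt k = c * (2 * (1 / ((k:ℝ) + 1) - 1 / ((k:ℝ) + (j:ℝ) + 1))) := by
    intro k hke
    rw [hmt k, ← kernel_integral_aux j k hke, ← MeasureTheory.integral_const_mul]
    congr 1
    funext ξ
    rw [hK ξ]
    by_cases h : |ξ| ≤ 1
    · rw [if_pos h, Set.indicator_of_mem (by rw [Set.mem_Icc, ← abs_le]; exact h)]
      ring
    · rw [if_neg h, Set.indicator_of_notMem (by rw [Set.mem_Icc, ← abs_le]; exact h)]
      ring
  have h3 : (j:ℝ) + 3 ≠ 0 := by positivity
  have h5 : (j:ℝ) + 5 ≠ 0 := by positivity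
  have h1 : (j:ℝ) + 1 ≠ 0 := by positivity
  have h2 : mt 2 = ((j : ℝ) + 1) / (3 * ((j : ℝ) + 3)) := by
    rw [key 2 ⟨1, rfl⟩, hc]
    push_cast
    field_simp
    ring_nf
    try simp
  have h4 : mt 4 = ((j : ℝ) + 1) / (5 * ((j : ℝ) + 5)) := by
    rw [key 4 ⟨2, rfl⟩, hc]
    push_cast
    field_simp
    ring_nf
    try simp
  have hratio : mt 4 / (mt 2) ^ 2
      = 9 * ((j : ℝ) + 3) ^ 2 / (5 * ((j : ℝ) + 1) * ((j : ℝ) + 5)) := by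
    rw [h2, h4]
    field_simp
    ring_nf
    try simp
  refine ⟨h2, h4, hratio, ?_⟩
  rw [hratio, div_lt_iff₀ (by positivity)]
  nlinarith [hj1, sq_nonneg ((j:ℝ) - 1)]
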